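/- Let δ be a dissimilarity map on {1,…,m} satisfying the Kalmanson conditions with respect to the identity circular ordering, and let Q_δ(i,j) = (m−2)·δ(i,j) − Σ_{t≠i} δ(i,t) − Σ_{t≠j} δ(j,t). If i < j − 3 (with 1 ≤ i < j ≤ m), then there exists an index k ∈ {1,…,m} such that Q_δ(i,j) − Q_δ(k, k⊕1) ≥ 0, where k⊕1 denotes the cyclic successor of k (i.e., k+1 if k < m, and 1 if k = m). -/

import Mathlib

/-- A dissimilarity map on `{1,…,m}` (modeled as `Fin m`): symmetric,
nonnegative, and zero on the diagonal. -/
def IsDissimilarity {m : ℕ} (δ : Fin m → Fin m → ℝ) : Prop :=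
  (∀ i j, δ i j = δ j i) ∧ (∀ i j, 0 ≤ δ i j) ∧ (∀ i, δ i i = 0)

/-- The Kalmanson conditions with respect to the identity circular ordering. -/
def Kalmanson {m : ℕ} (δ : Fin m → Fin m → ℝ) : Prop :=
  ∀ i j k l : Fin m, i < j → j < k → k < l →
    δ i j + δ k l ≤ δ i k + δ j l ∧ δ i l + δ j k ≤ δ i k + δ j l

/-- The neighbor-joining selection criterion
`Q_δ(i,j) = (m−2)·δ(i,j) − Σ_{t≠i} δ(i,t) − Σ_{t≠j} δ(j,t)`. -/
noncomputable def Qcrit {m : ℕ} (δ : Fin m → Fin m → ℝ) (i j : Fin m) : ℝ :=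
  ((m : ℝ) - 2) * δ i j - ∑ t ∈ Finset.univ.erase i, δ i t
    - ∑ t ∈ Finset.univ.erase j, δ j t

open Fin.NatCast

lemma Qcrit_symm {m : ℕ} (δ : Fin m → Fin m → ℝ) (hdis : IsDissimilarity δ)
    (a b : Fin m) : Qcrit δ a b = Qcrit δ b a := by
  unfold Qcrit; rw [hdis.1 a b]; ring

/-- Rotating a dissimilarity map. -/
lemma IsDissimilarity_rot {m : ℕ} (δ : Fin m → Fin m → ℝ) (hdis : IsDissimilarity δ)
    (r : Fin m) : IsDissimilarity (fun a b => δ (a + r) (b + r)) :=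
  ⟨fun a b => hdis.1 _ _, fun a b => hdis.2.1 _ _, fun a => hdis.2.2 _⟩

lemma Qcrit_rot {m : ℕ} [NeZero m] (δ : Fin m → Fin m → ℝ) (hdis : IsDissimilarity δ)
    (r x y : Fin m) : Qcrit (fun a b => δ (a + r) (b + r)) x y = Qcrit δ (x + r) (y + r) := by
  have key : ∀ z : Fin m, ∑ t ∈ Finset.univ.erase z, δ (z + r) (t + r)
      = ∑ t ∈ Finset.univ.erase (z + r), δ (z + r) t := by
    intro z
    have h1 : ∑ t ∈ Finset.univ.erase z, δ (z + r) (t + r)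
        = ∑ t : Fin m, δ (z + r) (t + r) :=
      Finset.sum_erase _ (by simpa using hdis.2.2 (z + r))
    have h2 : ∑ t ∈ Finset.univ.erase (z + r), δ (z + r) t
        = ∑ t : Fin m, δ (z + r) t :=
      Finset.sum_erase _ (hdis.2.2 (z + r))
    rw [h1, h2]
    exact Fintype.sum_equiv (Equiv.addRight r) _ _ (fun t => rfl)
  unfold Qcrit
  rw [key x, key y]

lemma Kalmanson_rot {m : ℕ} (δ : Fin m → Fin m → ℝ) (hdis : IsDissimilarity δ)
    (hK : Kalmanson δ) (r : Fin m) : Kalmanson (fun a b => δ (a + r) (b + r)) := by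
  have hsym := hdis.1
  have rot : ∀ a b c d : Fin m,
      (δ a b + δ c d ≤ δ a c + δ b d ∧ δ a d + δ b c ≤ δ a c + δ b d) →
      (δ b c + δ d a ≤ δ b d + δ c a ∧ δ b a + δ c d ≤ δ b d + δ c a) := by
    intro a b c d ⟨h1, h2⟩
    have e1 : δ d a = δ a d := hsym _ _
    have e2 : δ c a = δ a c := hsym _ _
    have e3 : δ b a = δ a b := hsym _ _
    exact ⟨by linarith, by linarith⟩
  intro i j k l hij hjk hkl
  simp only []
  rw [Fin.lt_def] at hij hjk hkl
  have dm : ∀ x : Fin m, (x + r).val + m = x.val + r.val ∨ (x + r).val = x.val + r.val := by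
    intro x
    rcases Nat.lt_or_ge (x.val + r.val) m with h | h
    · right; rw [Fin.add_def]; exact Nat.mod_eq_of_lt h
    · left; rw [Fin.add_def]
      have hx := x.isLt; have hr := r.isLt
      have hmod : (x.val + r.val) % m = x.val + r.val - m := by
        rw [Nat.mod_eq_sub_mod h, Nat.mod_eq_of_lt (by omega)]
      simp only [hmod]; omega
  have c0 : ∀ a b c d : Fin m, a < b → b < c → c < d →
      (δ a b + δ c d ≤ δ a c + δ b d ∧ δ a d + δ b c ≤ δ a c + δ b d) := hK
  have c1 : ∀ a b c d : Fin m, d < a → a < b → b < c →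
      (δ a b + δ c d ≤ δ a c + δ b d ∧ δ a d + δ b c ≤ δ a c + δ b d) := by
    intro a b c d h1 h2 h3
    exact rot _ _ _ _ (c0 d a b c h1 h2 h3)
  have c2 : ∀ a b c d : Fin m, c < d → d < a → a < b →
      (δ a b + δ c d ≤ δ a c + δ b d ∧ δ a d + δ b c ≤ δ a c + δ b d) := by
    intro a b c d h1 h2 h3
    exact rot _ _ _ _ (c1 d a b c h1 h2 h3)
  have c3 : ∀ a b c d : Fin m, b < c → c < d → d < a →
      (δ a b + δ c d ≤ δ a c + δ b d ∧ δ a d + δ b c ≤ δ a c + δ b d) := by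
    intro a b c d h1 h2 h3
    exact rot _ _ _ _ (c2 d a b c h1 h2 h3)
  have dm' : ∀ x : Fin m, ∃ v : ℕ, (x + r).val = v ∧ v < m ∧
      (v + m = x.val + r.val ∨ v = x.val + r.val) :=
    fun x => ⟨(x + r).val, rfl, (x + r).isLt, dm x⟩
  obtain ⟨vi, hvi, hIi, hi⟩ := dm' i
  obtain ⟨vj, hvj, hIj, hj⟩ := dm' j
  obtain ⟨vk, hvk, hIk, hk⟩ := dm' k
  obtain ⟨vl, hvl, hIl, hl⟩ := dm' l
  have hi' := i.isLt
  have hj' := j.isLt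
  have hk' := k.isLt
  have hl' := l.isLt
  have hr' := r.isLt
  rcases hi with hi | hi <;> rcases hj with hj | hj <;>
    rcases hk with hk | hk <;> rcases hl with hl | hl <;>
    first
      | (exfalso; omega)
      | (apply c0 <;> (simp only [Fin.lt_def, hvi, hvj, hvk, hvl]; omega))
      | (apply c1 <;> (simp only [Fin.lt_def, hvi, hvj, hvk, hvl]; omega))
      | (apply c2 <;> (simp only [Fin.lt_def, hvi, hvj, hvk, hvl]; omega))
      | (apply c3 <;> (simp only [Fin.lt_def, hvi, hvj, hvk, hvl]; omega))

/-- `δ` read through natural-number indices. -/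
noncomputable def dd {m : ℕ} [NeZero m] (δ : Fin m → Fin m → ℝ) (a b : ℕ) : ℝ :=
  δ (a : Fin m) (b : Fin m)

/-- Row sums of `dd`. -/
noncomputable def Sd {m : ℕ} [NeZero m] (δ : Fin m → Fin m → ℝ) (a : ℕ) : ℝ :=
  ∑ t ∈ Finset.range m, dd δ a t

lemma dd_symm {m : ℕ} [NeZero m] (δ : Fin m → Fin m → ℝ) (hdis : IsDissimilarity δ)
    (a b : ℕ) : dd δ a b = dd δ b a := hdis.1 _ _

lemma dd_diag {m : ℕ} [NeZero m] (δ : Fin m → Fin m → ℝ) (hdis : IsDissimilarity δ)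
    (a : ℕ) : dd δ a a = 0 := hdis.2.2 _

lemma dd_kal {m : ℕ} [NeZero m] (δ : Fin m → Fin m → ℝ) (hK : Kalmanson δ)
    {a b c e : ℕ} (h1 : a < b) (h2 : b < c) (h3 : c < e) (h4 : e < m) :
    dd δ a b + dd δ c e ≤ dd δ a c + dd δ b e ∧
      dd δ a e + dd δ b c ≤ dd δ a c + dd δ b e := by
  have lt : ∀ {x y : ℕ}, x < y → y < m → (↑x : Fin m) < ↑y := by
    intro x y hxy hym
    rw [Fin.lt_def, Fin.val_cast_of_lt (by omega), Fin.val_cast_of_lt hym]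
    exact hxy
  exact hK _ _ _ _ (lt h1 (by omega)) (lt h2 (by omega)) (lt h3 h4)

lemma Qcrit_cast {m : ℕ} [NeZero m] (δ : Fin m → Fin m → ℝ) (hdis : IsDissimilarity δ)
    (a b : ℕ) : Qcrit δ ↑a ↑b = ((m : ℝ) - 2) * dd δ a b - Sd δ a - Sd δ b := by
  have key : ∀ c : ℕ, ∑ t ∈ Finset.univ.erase (↑c : Fin m), δ ↑c t = Sd δ c := by
    intro c
    rw [Finset.sum_erase _ (hdis.2.2 (↑c : Fin m))]
    rw [show Sd δ c = ∑ t ∈ Finset.range m, (fun u : ℕ => δ ↑c ↑u) t from rfl,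
      ← Fin.sum_univ_eq_sum_range (fun u : ℕ => δ ↑c ↑u) m]
    exact Finset.sum_congr rfl (fun x _ => by rw [Fin.cast_val_eq_self])
  unfold Qcrit
  rw [key a, key b]
  rfl

lemma sum_split_0n {n : ℕ} (hn : 1 ≤ n) (f : ℕ → ℝ) :
    ∑ v ∈ Finset.range (n+1), f v = f 0 + (∑ v ∈ Finset.Ico 1 n, f v) + f n := by
  rw [Finset.range_eq_Ico, ← Finset.sum_Ico_consecutive f (Nat.zero_le n) (Nat.le_succ n),
    Finset.sum_Ico_succ_top (le_refl n), Finset.Ico_self, Finset.sum_empty,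
    Finset.sum_eq_sum_Ico_succ_bot hn]
  ring

lemma sum_shift (a len : ℕ) (f : ℕ → ℝ) :
    ∑ k ∈ Finset.Ico a (a+len), f k = ∑ k ∈ Finset.range len, f (a+k) := by
  rw [Finset.sum_Ico_eq_sum_range, Nat.add_sub_cancel_left]

/-- The inequality `H' ≥ 0`. -/
lemma Hp_nonneg {m : ℕ} [NeZero m] (δ : Fin m → Fin m → ℝ) (hdis : IsDissimilarity δ)
    (hK : Kalmanson δ) {n : ℕ} (hn : 2 ≤ n) (hnm : n < m) :
    0 ≤ (∑ v ∈ Finset.Ico 1 n, dd δ 0 v) + (∑ v ∈ Finset.Ico 1 n, dd δ v n)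
      - ((n : ℝ) - 2) * dd δ 0 n - ∑ k ∈ Finset.range n, dd δ k (k+1) := by
  have key : 0 ≤ ∑ k ∈ Finset.range (n-2),
      (dd δ 0 (k+2) + dd δ (k+1) n - dd δ 0 n - dd δ (k+1) (k+2)) := by
    apply Finset.sum_nonneg
    intro k hk
    rw [Finset.mem_range] at hk
    have h := (dd_kal δ hK (show 0 < k+1 by omega) (show k+1 < k+2 by omega)
      (show k+2 < n by omega) hnm).2
    linarith
  have e1 : ∑ k ∈ Finset.range (n-2), dd δ 0 (k+2)
      = (∑ v ∈ Finset.Ico 1 n, dd δ 0 v) - dd δ 0 1 := by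
    have : ∑ v ∈ Finset.Ico 1 n, dd δ 0 v
        = dd δ 0 1 + ∑ v ∈ Finset.Ico 2 n, dd δ 0 v := by
      rw [Finset.sum_eq_sum_Ico_succ_bot (by omega : 1 < n)]
    rw [this, show (n : ℕ) = 2 + (n-2) by omega, sum_shift 2 (n-2) (fun v => dd δ 0 v)]
    rw [show 2 + (n - 2) - 2 = n - 2 from by omega]
    have : ∀ k, dd δ 0 (2+k) = dd δ 0 (k+2) := fun k => by rw [Nat.add_comm]
    rw [Finset.sum_congr rfl (fun k _ => this k)]
    ring
  have e2 : ∑ k ∈ Finset.range (n-2), dd δ (k+1) n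
      = (∑ v ∈ Finset.Ico 1 n, dd δ v n) - dd δ (n-1) n := by
    have h1 : ∑ v ∈ Finset.Ico 1 n, dd δ v n
        = (∑ v ∈ Finset.Ico 1 (n-1), dd δ v n) + dd δ (n-1) n := by
      rw [show (n:ℕ) = (n-1)+1 by omega, Finset.sum_Ico_succ_top (by omega : 1 ≤ n-1)]
      rw [show (n-1)+1-1 = n-1 from by omega]
    have h2 : ∑ v ∈ Finset.Ico 1 (n-1), dd δ v n
        = ∑ k ∈ Finset.range (n-2), dd δ (k+1) n := by
      rw [show (n-1 : ℕ) = 1 + (n-2) by omega, sum_shift 1 (n-2) (fun v => dd δ v n)]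
      exact Finset.sum_congr rfl (fun k _ => by rw [Nat.add_comm])
    rw [h1, h2]; ring
  have e3 : ∑ k ∈ Finset.range (n-2), dd δ (k+1) (k+2)
      = (∑ k ∈ Finset.range n, dd δ k (k+1)) - dd δ 0 1 - dd δ (n-1) n := by
    have h1 : ∑ k ∈ Finset.range n, dd δ k (k+1)
        = (∑ k ∈ Finset.range (n-1), dd δ k (k+1)) + dd δ (n-1) n := by
      rw [show (n:ℕ) = (n-1)+1 by omega, Finset.sum_range_succ]
      rw [show (n-1)+1-1 = n-1 from by omega]
    have h2 : ∑ k ∈ Finset.range (n-1), dd δ k (k+1)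
        = dd δ 0 1 + ∑ k ∈ Finset.range (n-2), dd δ (k+1) (k+2) := by
      rw [show (n-1 : ℕ) = (n-2)+1 by omega, Finset.sum_range_succ' (fun k => dd δ k (k+1))]
      ring
    rw [h1, h2]; ring
  have e4 : ∑ k ∈ Finset.range (n-2), (dd δ 0 n : ℝ) = ((n:ℝ) - 2) * dd δ 0 n := by
    rw [Finset.sum_const, Finset.card_range, nsmul_eq_mul, Nat.cast_sub hn, Nat.cast_ofNat]
  calc (0:ℝ) ≤ ∑ k ∈ Finset.range (n-2),
      (dd δ 0 (k+2) + dd δ (k+1) n - dd δ 0 n - dd δ (k+1) (k+2)) := key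
    _ = (∑ v ∈ Finset.Ico 1 n, dd δ 0 v) + (∑ v ∈ Finset.Ico 1 n, dd δ v n)
      - ((n : ℝ) - 2) * dd δ 0 n - ∑ k ∈ Finset.range n, dd δ k (k+1) := by
      rw [Finset.sum_sub_distrib, Finset.sum_sub_distrib, Finset.sum_add_distrib,
        e1, e2, e3, e4]
      ring

/-- The inequality `T(q) ≥ 0`, by induction. -/
lemma Tq_nonneg {m : ℕ} [NeZero m] (δ : Fin m → Fin m → ℝ) (hdis : IsDissimilarity δ)
    (hK : Kalmanson δ) : ∀ q : ℕ, 2 ≤ q → q < m →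
    0 ≤ (∑ v ∈ Finset.Ico 1 q, ∑ u ∈ Finset.range (q+1), dd δ v u)
      - ((q : ℝ) - 1) * ∑ k ∈ Finset.range q, dd δ k (k+1) := by
  intro q
  induction q with
  | zero => omega
  | succ q ih =>
    intro hq2 hqm
    rcases Nat.lt_or_ge q 2 with hq | hq
    · -- base case q+1 = 2, i.e. q = 1
      have hq1 : q = 1 := by omega
      subst hq1
      have : ∑ v ∈ Finset.Ico 1 2, ∑ u ∈ Finset.range 3, dd δ v u
          = dd δ 1 0 + dd δ 1 1 + dd δ 1 2 := by
        rw [show Finset.Ico 1 2 = {1} from rfl]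
        simp [Finset.sum_range_succ]
      rw [this, dd_diag δ hdis, dd_symm δ hdis 1 0]
      simp [Finset.sum_range_succ]
      ring_nf
      simp
    · -- inductive step, q ≥ 2
      have hih := ih hq (by omega)
      -- certificate sum
      have key : 0 ≤ ∑ u ∈ Finset.range (q-1),
          (dd δ u q + dd δ (u+1) (q+1) - dd δ u (u+1) - dd δ q (q+1)) := by
        apply Finset.sum_nonneg
        intro u hu
        rw [Finset.mem_range] at hu
        have h := (dd_kal δ hK (show u < u+1 by omega) (show u+1 < q by omega)
          (show q < q+1 by omega) hqm).1
        linarith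
      -- difference identity
      have diff : (∑ v ∈ Finset.Ico 1 (q+1), ∑ u ∈ Finset.range (q+2), dd δ v u)
            - ((↑(q+1) : ℝ) - 1) * ∑ k ∈ Finset.range (q+1), dd δ k (k+1)
          = ((∑ v ∈ Finset.Ico 1 q, ∑ u ∈ Finset.range (q+1), dd δ v u)
            - ((q : ℝ) - 1) * ∑ k ∈ Finset.range q, dd δ k (k+1))
            + ∑ u ∈ Finset.range (q-1),
              (dd δ u q + dd δ (u+1) (q+1) - dd δ u (u+1) - dd δ q (q+1)) := by
        have hA : ∑ v ∈ Finset.Ico 1 (q+1), ∑ u ∈ Finset.range (q+2), dd δ v u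
            = (∑ v ∈ Finset.Ico 1 q, ∑ u ∈ Finset.range (q+1), dd δ v u)
              + (∑ v ∈ Finset.Ico 1 q, dd δ v (q+1))
              + ∑ u ∈ Finset.range (q+2), dd δ q u := by
          rw [Finset.sum_Ico_succ_top (by omega : 1 ≤ q)]
          have : ∀ v, ∑ u ∈ Finset.range (q+2), dd δ v u
              = (∑ u ∈ Finset.range (q+1), dd δ v u) + dd δ v (q+1) := by
            intro v; rw [Finset.sum_range_succ]
          rw [Finset.sum_congr rfl (fun v _ => this v), Finset.sum_add_distrib]
        have hP : ∑ k ∈ Finset.range (q+1), dd δ k (k+1)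
            = (∑ k ∈ Finset.range q, dd δ k (k+1)) + dd δ q (q+1) :=
          Finset.sum_range_succ _ q
        -- expand the certificate sum
        have hc1 : ∑ u ∈ Finset.range (q-1), dd δ u q
            = (∑ u ∈ Finset.range (q+2), dd δ q u) - dd δ q (q-1) - dd δ q q
              - dd δ q (q+1) + dd δ q (q-1) - dd δ (q-1) q := by
          have h1 : ∑ u ∈ Finset.range (q+2), dd δ q u
              = (∑ u ∈ Finset.range q, dd δ q u) + dd δ q q + dd δ q (q+1) := by
            rw [Finset.sum_range_succ, Finset.sum_range_succ]
          have h2 : ∑ u ∈ Finset.range q, dd δ q u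
              = (∑ u ∈ Finset.range (q-1), dd δ q u) + dd δ q (q-1) := by
            rw [show (q:ℕ) = (q-1)+1 by omega, Finset.sum_range_succ]
            rw [show (q-1)+1-1 = q-1 from by omega]
          have h3 : ∑ u ∈ Finset.range (q-1), dd δ u q
              = ∑ u ∈ Finset.range (q-1), dd δ q u :=
            Finset.sum_congr rfl (fun u _ => dd_symm δ hdis u q)
          rw [h3, h1, h2, dd_symm δ hdis (q-1) q]
          ring
        have hc2 : ∑ u ∈ Finset.range (q-1), dd δ (u+1) (q+1)
            = ∑ v ∈ Finset.Ico 1 q, dd δ v (q+1) := by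
          have hs := sum_shift 1 (q-1) (fun v => dd δ v (q+1))
          rw [show 1 + (q-1) = q from by omega] at hs
          rw [hs]
          exact Finset.sum_congr rfl (fun k _ => by rw [Nat.add_comm])
        have hc3 : ∑ u ∈ Finset.range (q-1), dd δ u (u+1)
            = (∑ k ∈ Finset.range q, dd δ k (k+1)) - dd δ (q-1) q := by
          have : ∑ k ∈ Finset.range q, dd δ k (k+1)
              = (∑ k ∈ Finset.range (q-1), dd δ k (k+1)) + dd δ (q-1) ((q-1)+1) := by
            rw [show (q:ℕ) = (q-1)+1 by omega, Finset.sum_range_succ]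
            rw [show (q-1)+1-1 = q-1 from by omega]
          rw [this, show (q-1)+1 = q from by omega]
          ring
        have hc4 : ∑ u ∈ Finset.range (q-1), (dd δ q (q+1) : ℝ)
            = ((q:ℝ) - 1) * dd δ q (q+1) := by
          rw [Finset.sum_const, Finset.card_range, nsmul_eq_mul,
            Nat.cast_sub (by omega : 1 ≤ q), Nat.cast_one]
        rw [Finset.sum_sub_distrib, Finset.sum_sub_distrib, Finset.sum_add_distrib,
          hc1, hc2, hc3, hc4, hA, hP, dd_symm δ hdis q (q-1), dd_diag δ hdis q]
        push_cast
        ring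
      show 0 ≤ (∑ v ∈ Finset.Ico 1 (q+1), ∑ u ∈ Finset.range (q+2), dd δ v u)
        - ((↑(q+1) : ℝ) - 1) * ∑ k ∈ Finset.range (q+1), dd δ k (k+1)
      rw [diff]
      linarith

/-- Core lemma: for the pair (0,n) with 2 ≤ n and 2n ≤ m, some adjacent pair
(k,k+1) with k < n has Qcrit at most Qcrit 0 n. -/
lemma core_lemma (m n : ℕ) [NeZero m] (δ : Fin m → Fin m → ℝ)
    (hdis : IsDissimilarity δ) (hK : Kalmanson δ) (hn : 2 ≤ n) (hnm : 2 * n ≤ m) :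
    ∃ k : ℕ, k < n ∧ 0 ≤ Qcrit δ (0 : Fin m) (↑n) - Qcrit δ ↑k ↑(k + 1) := by
  have hnm' : n < m := by omega
  have hcast0 : ((0:ℕ) : Fin m) = (0 : Fin m) := Nat.cast_zero
  have hcastn1 : ((n-1:ℕ):ℝ) = (n:ℝ) - 1 := by
    rw [Nat.cast_sub (by omega), Nat.cast_one]
  -- per-k expansion of the difference of Q-criteria
  have hterm : ∀ k : ℕ, Qcrit δ (0 : Fin m) ↑n - Qcrit δ ↑k ↑(k+1)
      = (((m:ℝ)-2) * dd δ 0 n - ((m:ℝ)-2) * dd δ k (k+1))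
        + ((Sd δ k + Sd δ (k+1)) - (Sd δ 0 + Sd δ n)) := by
    intro k
    rw [← hcast0, Qcrit_cast δ hdis, Qcrit_cast δ hdis]
    ring
  -- sum over k of the S-terms, reorganized per t
  have hSsum : ∑ k ∈ Finset.range n, (Sd δ k + Sd δ (k+1))
      = ∑ t ∈ Finset.range m,
          (2*(∑ v ∈ Finset.range (n+1), dd δ v t) - dd δ 0 t - dd δ n t) := by
    have h1 : ∀ k : ℕ, Sd δ k + Sd δ (k+1)
        = ∑ t ∈ Finset.range m, (dd δ k t + dd δ (k+1) t) := by
      intro k; rw [Finset.sum_add_distrib]; rfl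
    rw [Finset.sum_congr rfl (fun k _ => h1 k), Finset.sum_comm]
    apply Finset.sum_congr rfl
    intro t _
    rw [Finset.sum_add_distrib]
    have e1 : ∑ k ∈ Finset.range n, dd δ k t
        = (∑ v ∈ Finset.range (n+1), dd δ v t) - dd δ n t := by
      rw [Finset.sum_range_succ]; ring
    have e2 : ∑ k ∈ Finset.range n, dd δ (k+1) t
        = (∑ v ∈ Finset.range (n+1), dd δ v t) - dd δ 0 t := by
      rw [Finset.sum_range_succ' (fun v => dd δ v t) n]; ring
    rw [e1, e2]; ring
  -- grand total expansion
  have hQsum : ∑ k ∈ Finset.range n, (Qcrit δ (0 : Fin m) ↑n - Qcrit δ ↑k ↑(k+1))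
      = ((m:ℝ)-2) * ((n:ℝ) * dd δ 0 n - ∑ k ∈ Finset.range n, dd δ k (k+1))
        + ((∑ t ∈ Finset.range m,
            (2*(∑ v ∈ Finset.range (n+1), dd δ v t) - dd δ 0 t - dd δ n t))
          - (n:ℝ) * (Sd δ 0 + Sd δ n)) := by
    rw [Finset.sum_congr rfl (fun k _ => hterm k), Finset.sum_add_distrib,
      Finset.sum_sub_distrib, Finset.sum_sub_distrib, hSsum, Finset.sum_const,
      Finset.sum_const, Finset.card_range, ← Finset.mul_sum, nsmul_eq_mul, nsmul_eq_mul]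
    ring
  -- split row sums of 0 and n into inner and outer parts
  have hSsplit : ∀ a : ℕ, Sd δ a
      = (∑ t ∈ Finset.range (n+1), dd δ a t) + ∑ t ∈ Finset.Ico (n+1) m, dd δ a t := by
    intro a
    show ∑ t ∈ Finset.range m, dd δ a t = _
    rw [Finset.range_eq_Ico,
      ← Finset.sum_Ico_consecutive _ (Nat.zero_le (n+1)) (by omega : n+1 ≤ m)]
    rw [Finset.range_eq_Ico]
  -- split the big t-sum into inner and outer
  have hsplitT : ∑ t ∈ Finset.range m,
        (2*(∑ v ∈ Finset.range (n+1), dd δ v t) - dd δ 0 t - dd δ n t)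
      = (∑ t ∈ Finset.range (n+1),
          (2*(∑ v ∈ Finset.range (n+1), dd δ v t) - dd δ 0 t - dd δ n t))
        + ∑ t ∈ Finset.Ico (n+1) m,
          (2*(∑ v ∈ Finset.range (n+1), dd δ v t) - dd δ 0 t - dd δ n t) := by
    rw [Finset.range_eq_Ico,
      ← Finset.sum_Ico_consecutive _ (Nat.zero_le (n+1)) (by omega : n+1 ≤ m)]
    rw [Finset.range_eq_Ico]
  -- abbreviations for inner sums
  have hA0 : ∑ t ∈ Finset.range (n+1), dd δ 0 t
      = (∑ v ∈ Finset.Ico 1 n, dd δ 0 v) + dd δ 0 n := by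
    rw [sum_split_0n (by omega : 1 ≤ n), dd_diag δ hdis]; ring
  have hBn : ∑ t ∈ Finset.range (n+1), dd δ n t
      = (∑ v ∈ Finset.Ico 1 n, dd δ v n) + dd δ 0 n := by
    rw [sum_split_0n (by omega : 1 ≤ n), dd_diag δ hdis, dd_symm δ hdis n 0]
    rw [Finset.sum_congr rfl (fun v _ => dd_symm δ hdis n v)]
    ring
  -- the inner double sum
  have hZ : ∑ t ∈ Finset.range (n+1), ∑ v ∈ Finset.range (n+1), dd δ v t
      = (∑ v ∈ Finset.Ico 1 n, ∑ u ∈ Finset.range (n+1), dd δ v u)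
        + ((∑ v ∈ Finset.Ico 1 n, dd δ 0 v) + (∑ v ∈ Finset.Ico 1 n, dd δ v n))
        + 2 * dd δ 0 n := by
    rw [Finset.sum_comm, sum_split_0n (by omega : 1 ≤ n)
      (fun v => ∑ t ∈ Finset.range (n+1), dd δ v t), hA0, hBn]
    ring
  -- outer per-t bound
  have hOut : (((m:ℕ) - (n+1) : ℕ) : ℝ)
        * (((∑ v ∈ Finset.Ico 1 n, dd δ 0 v) + (∑ v ∈ Finset.Ico 1 n, dd δ v n))
          - (2*(n:ℝ)-2) * dd δ 0 n)
      ≤ ∑ t ∈ Finset.Ico (n+1) m,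
          ((2*(∑ v ∈ Finset.range (n+1), dd δ v t) - dd δ 0 t - dd δ n t)
            - (n:ℝ) * (dd δ 0 t + dd δ n t)) := by
    rw [← Nat.card_Ico (n+1) m, ← nsmul_eq_mul]
    apply Finset.card_nsmul_le_sum
    intro t ht
    rw [Finset.mem_Ico] at ht
    have hper : ∀ v ∈ Finset.Ico 1 n,
        dd δ 0 v + dd δ v n + (dd δ 0 t + dd δ n t) ≤ 2 * dd δ v t + 2 * dd δ 0 n := by
      intro v hv
      rw [Finset.mem_Ico] at hv
      obtain ⟨c1, c2⟩ := dd_kal δ hK (show 0 < v by omega) (show v < n by omega)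
        (show n < t by omega) (by omega)
      linarith
    have hsv := Finset.sum_le_sum hper
    rw [Finset.sum_add_distrib, Finset.sum_add_distrib, Finset.sum_const,
      Finset.sum_add_distrib, Finset.sum_const, Nat.card_Ico, nsmul_eq_mul,
      nsmul_eq_mul, ← Finset.mul_sum, hcastn1] at hsv
    have hsp : ∑ v ∈ Finset.range (n+1), dd δ v t
        = dd δ 0 t + (∑ v ∈ Finset.Ico 1 n, dd δ v t) + dd δ n t :=
      sum_split_0n (by omega : 1 ≤ n) (fun v => dd δ v t)
    rw [hsp]
    linarith
  -- inner part identity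
  have hInn : (∑ t ∈ Finset.range (n+1),
        (2*(∑ v ∈ Finset.range (n+1), dd δ v t) - dd δ 0 t - dd δ n t))
        - (n:ℝ) * ((∑ t ∈ Finset.range (n+1), dd δ 0 t)
          + ∑ t ∈ Finset.range (n+1), dd δ n t)
      = 2 * ((∑ v ∈ Finset.Ico 1 n, ∑ u ∈ Finset.range (n+1), dd δ v u)
          + ((∑ v ∈ Finset.Ico 1 n, dd δ 0 v) + (∑ v ∈ Finset.Ico 1 n, dd δ v n))
          + 2 * dd δ 0 n)
        - ((n:ℝ)+1) * (((∑ v ∈ Finset.Ico 1 n, dd δ 0 v)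
          + (∑ v ∈ Finset.Ico 1 n, dd δ v n)) + 2 * dd δ 0 n) := by
    rw [Finset.sum_sub_distrib, Finset.sum_sub_distrib, ← Finset.mul_sum, hZ, hA0, hBn]
    ring
  -- lower bounds for the two inner quantities
  have hT := Tq_nonneg δ hdis hK n hn hnm'
  have hHp := Hp_nonneg δ hdis hK hn hnm'
  have hcastm : (((m:ℕ) - (n+1) : ℕ) : ℝ) = (m:ℝ) - (n:ℝ) - 1 := by
    rw [Nat.cast_sub (by omega : n+1 ≤ m)]
    push_cast; ring
  have hm2n : (0:ℝ) ≤ (m:ℝ) - 2*(n:ℝ) := by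
    have : ((2*n : ℕ) : ℝ) ≤ ((m:ℕ) : ℝ) := Nat.cast_le.mpr hnm
    push_cast at this; linarith
  -- the grand inequality
  have hsub : ∑ t ∈ Finset.Ico (n+1) m,
        ((2*(∑ v ∈ Finset.range (n+1), dd δ v t) - dd δ 0 t - dd δ n t)
          - (n:ℝ) * (dd δ 0 t + dd δ n t))
      = (∑ t ∈ Finset.Ico (n+1) m,
          (2*(∑ v ∈ Finset.range (n+1), dd δ v t) - dd δ 0 t - dd δ n t))
        - (n:ℝ) * ((∑ t ∈ Finset.Ico (n+1) m, dd δ 0 t)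
          + ∑ t ∈ Finset.Ico (n+1) m, dd δ n t) := by
    rw [Finset.sum_sub_distrib, ← Finset.mul_sum, Finset.sum_add_distrib]
  have grand : 0 ≤ ∑ k ∈ Finset.range n, (Qcrit δ (0 : Fin m) ↑n - Qcrit δ ↑k ↑(k+1)) := by
    rw [hQsum, hsplitT, hSsplit 0, hSsplit n]
    have expand : ((m:ℝ)-2) * ((n:ℝ) * dd δ 0 n - ∑ k ∈ Finset.range n, dd δ k (k+1))
        + (((∑ t ∈ Finset.range (n+1),
            (2*(∑ v ∈ Finset.range (n+1), dd δ v t) - dd δ 0 t - dd δ n t))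
          + ∑ t ∈ Finset.Ico (n+1) m,
            (2*(∑ v ∈ Finset.range (n+1), dd δ v t) - dd δ 0 t - dd δ n t))
          - (n:ℝ) * (((∑ t ∈ Finset.range (n+1), dd δ 0 t)
              + ∑ t ∈ Finset.Ico (n+1) m, dd δ 0 t)
            + ((∑ t ∈ Finset.range (n+1), dd δ n t)
              + ∑ t ∈ Finset.Ico (n+1) m, dd δ n t)))
        = ((m:ℝ)-2) * ((n:ℝ) * dd δ 0 n - ∑ k ∈ Finset.range n, dd δ k (k+1))
          + ((∑ t ∈ Finset.range (n+1),
              (2*(∑ v ∈ Finset.range (n+1), dd δ v t) - dd δ 0 t - dd δ n t))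
            - (n:ℝ) * ((∑ t ∈ Finset.range (n+1), dd δ 0 t)
              + ∑ t ∈ Finset.range (n+1), dd δ n t))
          + ∑ t ∈ Finset.Ico (n+1) m,
              ((2*(∑ v ∈ Finset.range (n+1), dd δ v t) - dd δ 0 t - dd δ n t)
                - (n:ℝ) * (dd δ 0 t + dd δ n t)) := by
      rw [hsub]; ring
    rw [expand, hInn]
    have final : ((m:ℝ)-2) * ((n:ℝ) * dd δ 0 n - ∑ k ∈ Finset.range n, dd δ k (k+1))
        + (2 * ((∑ v ∈ Finset.Ico 1 n, ∑ u ∈ Finset.range (n+1), dd δ v u)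
            + ((∑ v ∈ Finset.Ico 1 n, dd δ 0 v) + (∑ v ∈ Finset.Ico 1 n, dd δ v n))
            + 2 * dd δ 0 n)
          - ((n:ℝ)+1) * (((∑ v ∈ Finset.Ico 1 n, dd δ 0 v)
            + (∑ v ∈ Finset.Ico 1 n, dd δ v n)) + 2 * dd δ 0 n))
        + (((m:ℕ) - (n+1) : ℕ) : ℝ)
          * (((∑ v ∈ Finset.Ico 1 n, dd δ 0 v) + (∑ v ∈ Finset.Ico 1 n, dd δ v n))
            - (2*(n:ℝ)-2) * dd δ 0 n)
        = 2 * ((∑ v ∈ Finset.Ico 1 n, ∑ u ∈ Finset.range (n+1), dd δ v u)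
            - ((n:ℝ)-1) * ∑ k ∈ Finset.range n, dd δ k (k+1))
          + ((m:ℝ) - 2*(n:ℝ))
            * ((∑ v ∈ Finset.Ico 1 n, dd δ 0 v) + (∑ v ∈ Finset.Ico 1 n, dd δ v n)
              - ((n:ℝ)-2) * dd δ 0 n - ∑ k ∈ Finset.range n, dd δ k (k+1)) := by
      rw [hcastm]; ring
    have hmulHp := mul_nonneg hm2n hHp
    linarith [hT, hOut, final, hmulHp]
  -- extract a single nonnegative term
  by_contra hcon
  push_neg at hcon
  have hneg : ∑ k ∈ Finset.range n, (Qcrit δ (0 : Fin m) ↑n - Qcrit δ ↑k ↑(k+1)) < 0 := by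
    calc ∑ k ∈ Finset.range n, (Qcrit δ (0 : Fin m) ↑n - Qcrit δ ↑k ↑(k+1))
        < ∑ k ∈ Finset.range n, (0:ℝ) := by
          apply Finset.sum_lt_sum_of_nonempty
          · exact Finset.nonempty_range_iff.mpr (by omega)
          · intro k hk
            have := hcon k (Finset.mem_range.mp hk)
            linarith
      _ = 0 := Finset.sum_const_zero
  linarith

/-- if `δ` is a Kalmanson dissimilarity map on `{1,…,m}` and
`i < j − 3`, then there is an index `k` whose cyclic successor `l`
(`l = k+1` for `k < m`, and `l = 1` for `k = m`) satisfies
`Q_δ(i,j) − Q_δ(k,l) ≥ 0`. -/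
theorem Q_nonadjacent_dominated {m : ℕ} (δ : Fin m → Fin m → ℝ)
    (hdis : IsDissimilarity δ) (hK : Kalmanson δ)
    (i j : Fin m) (hij : (i : ℕ) + 3 < (j : ℕ)) :
    ∃ k l : Fin m, (l : ℕ) = ((k : ℕ) + 1) % m ∧
      Qcrit δ i j - Qcrit δ k l ≥ 0 := by
  have hjm : (j : ℕ) < m := j.isLt
  have him : (i : ℕ) < m := i.isLt
  have hm : 5 ≤ m := by omega
  haveI : NeZero m := ⟨by omega⟩
  set n1 : ℕ := (j : ℕ) - (i : ℕ) with hn1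
  set n2 : ℕ := m - n1 with hn2
  by_cases hdeg : n2 = 1
  · -- degenerate: i = 0, j = m-1, take (k,l) = (j,i)
    have hi0 : (i : ℕ) = 0 := by omega
    have hj : (j : ℕ) = m - 1 := by omega
    refine ⟨j, i, ?_, ?_⟩
    · have hj1 : (j : ℕ) + 1 = m := by omega
      rw [hj1, Nat.mod_self, hi0]
    · rw [Qcrit_symm δ hdis j i]; simp
  · have hn2ge : 2 ≤ n2 := by omega
    by_cases hle : n1 ≤ n2
    · -- rotate by i, n = n1
      obtain ⟨k₀, hk₀, hQ⟩ := core_lemma m n1 (fun a b => δ (a + i) (b + i))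
        (IsDissimilarity_rot δ hdis i) (Kalmanson_rot δ hdis hK i) (by omega) (by omega)
      rw [Qcrit_rot δ hdis, Qcrit_rot δ hdis] at hQ
      have h0i : (0 : Fin m) + i = i := by rw [zero_add]
      have hvadd : ∀ (a : ℕ), a < m → ∀ b : Fin m, ((↑a + b : Fin m) : ℕ) = (a + b.val) % m := by
        intro a ha b
        rw [Fin.add_def, Fin.val_cast_of_lt ha]
      have hni : (↑n1 : Fin m) + i = j := by
        apply Fin.ext
        rw [hvadd n1 (by omega) i, show n1 + (i : ℕ) = (j : ℕ) by omega,
          Nat.mod_eq_of_lt hjm]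
      rw [h0i, hni] at hQ
      refine ⟨↑k₀ + i, ↑(k₀ + 1) + i, ?_, by linarith⟩
      rw [hvadd k₀ (by omega) i, hvadd (k₀+1) (by omega) i, Nat.mod_add_mod]
      congr 1; omega
    · -- rotate by j, n = n2
      obtain ⟨k₀, hk₀, hQ⟩ := core_lemma m n2 (fun a b => δ (a + j) (b + j))
        (IsDissimilarity_rot δ hdis j) (Kalmanson_rot δ hdis hK j) (by omega) (by omega)
      rw [Qcrit_rot δ hdis, Qcrit_rot δ hdis] at hQ
      have h0j : (0 : Fin m) + j = j := by rw [zero_add]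
      have hvadd : ∀ (a : ℕ), a < m → ∀ b : Fin m, ((↑a + b : Fin m) : ℕ) = (a + b.val) % m := by
        intro a ha b
        rw [Fin.add_def, Fin.val_cast_of_lt ha]
      have hnj : (↑n2 : Fin m) + j = i := by
        apply Fin.ext
        rw [hvadd n2 (by omega) j, show n2 + (j : ℕ) = m + (i : ℕ) by omega,
          Nat.add_mod_left, Nat.mod_eq_of_lt him]
      rw [h0j, hnj, Qcrit_symm δ hdis j i] at hQ
      refine ⟨↑k₀ + j, ↑(k₀ + 1) + j, ?_, by linarith⟩
      rw [hvadd k₀ (by omega) j, hvadd (k₀+1) (by omega) j, Nat.mod_add_mod]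
      congr 1; omega
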